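/- Let P be a probability measure supported on [−1,1]^d, ρ0 a probability measure on ℝ^{d+1} supported in {‖w‖₁ ≤ 1}, σ = ReLU, x̃ = (x,1), and Q*^{(n)} any probability measure supported on [−1,1]^d (e.g. an empirical measure). Define L^{(n)}(a) = ∫ V_a dQ*^{(n)} + log ∫ e^{-V_a} dP for a ∈ L²(ρ0), where V_a(x) = ∫ a(w) σ(w·x̃) dρ0(w). Then for every R ≥ 0, L^{(n)} attains its minimum on the closed ball {a ∈ L²(ρ0) : ‖a‖_{L²(ρ0)} ≤ R}. -/

import Mathlib

open MeasureTheory Real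
open scoped BigOperators RealInnerProductSpace

/-- `w · x̃` where `x̃ = (x, 1) ∈ ℝ^{d+1}`. -/
def dotTilde {d : ℕ} (w : Fin (d + 1) → ℝ) (x : Fin d → ℝ) : ℝ :=
  (∑ i : Fin d, w i.castSucc * x i) + w (Fin.last d)

/-- The ReLU random feature potential `V_a(x) = ∫ a(w) ReLU(w·x̃) dρ₀(w)`. -/
noncomputable def rfPotential {d : ℕ} (ρ0 : Measure (Fin (d + 1) → ℝ))
    (a : (Fin (d + 1) → ℝ) → ℝ) (x : Fin d → ℝ) : ℝ :=
  ∫ w, a w * max (dotTilde w x) 0 ∂ρ0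

/-- The objective `L^{(n)}(a) = ∫ V_a dQ + log ∫ e^{-V_a} dP`. -/
noncomputable def rfObjective {d : ℕ} (P Q : Measure (Fin d → ℝ))
    (ρ0 : Measure (Fin (d + 1) → ℝ)) (a : (Fin (d + 1) → ℝ) → ℝ) : ℝ :=
  (∫ x, rfPotential ρ0 a x ∂Q) + Real.log (∫ y, Real.exp (-(rfPotential ρ0 a y)) ∂P)

namespace RFAux

variable {d : ℕ}

noncomputable def feat (x : Fin d → ℝ) (w : Fin (d + 1) → ℝ) : ℝ :=
  max (dotTilde w x) 0

lemma abs_w_le {w : Fin (d + 1) → ℝ} (hw : (∑ i, |w i|) ≤ 1) (j : Fin (d + 1)) : |w j| ≤ 1 :=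
  le_trans (Finset.single_le_sum (fun i _ => abs_nonneg (w i)) (Finset.mem_univ j)) hw

lemma abs_relu_sub_relu (a b : ℝ) : |max a 0 - max b 0| ≤ |a - b| :=
  abs_max_sub_max_le_abs a b 0

lemma abs_sum_le {w : Fin (d + 1) → ℝ} (hw : (∑ i, |w i|) ≤ 1) (z : Fin d → ℝ) :
    |∑ i : Fin d, w i.castSucc * z i| ≤ ∑ i, |z i| := by
  calc |∑ i : Fin d, w i.castSucc * z i| ≤ ∑ i, |w i.castSucc * z i| :=
        Finset.abs_sum_le_sum_abs _ _
    _ ≤ ∑ i, |z i| := by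
        apply Finset.sum_le_sum
        intro i _
        rw [abs_mul]
        calc |w i.castSucc| * |z i| ≤ 1 * |z i| :=
              mul_le_mul_of_nonneg_right (abs_w_le hw _) (abs_nonneg _)
          _ = |z i| := one_mul _

lemma feat_bound {w : Fin (d + 1) → ℝ} (hw : (∑ i, |w i|) ≤ 1) (x : Fin d → ℝ) :
    |feat x w| ≤ 1 + ∑ i, |x i| := by
  have h1 : |feat x w| ≤ |dotTilde w x| := by
    rw [feat, abs_of_nonneg (le_max_right _ _)]
    exact max_le (le_abs_self _) (abs_nonneg _)
  refine h1.trans ?_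
  rw [dotTilde]
  calc |(∑ i : Fin d, w i.castSucc * x i) + w (Fin.last d)|
      ≤ |∑ i : Fin d, w i.castSucc * x i| + |w (Fin.last d)| := abs_add_le _ _
    _ ≤ (∑ i, |x i|) + 1 := add_le_add (abs_sum_le hw x) (abs_w_le hw _)
    _ = 1 + ∑ i, |x i| := add_comm _ _

lemma feat_lip {w : Fin (d + 1) → ℝ} (hw : (∑ i, |w i|) ≤ 1) (x y : Fin d → ℝ) :
    |feat x w - feat y w| ≤ ∑ i, |x i - y i| := by
  refine (abs_relu_sub_relu _ _).trans ?_
  have h : dotTilde w x - dotTilde w y = ∑ i : Fin d, w i.castSucc * (x i - y i) := by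
    simp [dotTilde, mul_sub, Finset.sum_sub_distrib]
  rw [h]
  exact abs_sum_le hw _

lemma feat_continuous_w (x : Fin d → ℝ) : Continuous (feat x) := by
  have : Continuous fun w : Fin (d+1) → ℝ => dotTilde w x := by
    unfold dotTilde
    have h1 : Continuous fun w : Fin (d+1) → ℝ => ∑ i : Fin d, w i.castSucc * x i :=
      continuous_finset_sum _ fun i _ => (continuous_apply _).mul continuous_const
    exact h1.add (continuous_apply _)
  exact this.max continuous_const

end RFAux

namespace RFAux

variable {d : ℕ} (ρ0 : Measure (Fin (d + 1) → ℝ)) [IsProbabilityMeasure ρ0]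

lemma norm_toLp_le {f : (Fin (d + 1) → ℝ) → ℝ} (hf : MemLp f 2 ρ0) {C : ℝ} (hC : 0 ≤ C)
    (hb : ∀ᵐ w ∂ρ0, |f w| ≤ C) : ‖hf.toLp f‖ ≤ C := by
  rw [Lp.norm_toLp]
  refine ENNReal.toReal_le_of_le_ofReal hC ?_
  have h := eLpNorm_le_of_ae_bound (μ := ρ0) (p := 2) (f := f)
    (hb.mono fun w hw => by simpa [Real.norm_eq_abs] using hw)
  simpa using h

variable (hρ0 : ∀ᵐ w ∂ρ0, (∑ i, |w i|) ≤ 1)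
include hρ0

lemma feat_memℒp (x : Fin d → ℝ) : MemLp (feat x) 2 ρ0 :=
  MemLp.of_bound (feat_continuous_w x).aestronglyMeasurable (1 + ∑ i, |x i|)
    (hρ0.mono fun w hw => by simpa [Real.norm_eq_abs] using feat_bound hw x)

noncomputable def phi (x : Fin d → ℝ) : Lp ℝ 2 ρ0 := (feat_memℒp ρ0 hρ0 x).toLp _

lemma phi_coe (x : Fin d → ℝ) : phi ρ0 hρ0 x =ᵐ[ρ0] feat x :=
  MemLp.coeFn_toLp _

lemma phi_norm_le (x : Fin d → ℝ) : ‖phi ρ0 hρ0 x‖ ≤ 1 + ∑ i, |x i| := by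
  refine norm_toLp_le ρ0 _ ?_ (hρ0.mono fun w hw => feat_bound hw x)
  positivity

lemma phi_sub_norm (x y : Fin d → ℝ) :
    ‖phi ρ0 hρ0 x - phi ρ0 hρ0 y‖ ≤ ∑ i, |x i - y i| := by
  rw [phi, phi, ← MemLp.toLp_sub]
  refine norm_toLp_le ρ0 _ ?_ (hρ0.mono fun w hw => by
    simpa [Pi.sub_apply] using feat_lip hw x y)
  positivity

lemma phi_continuous : Continuous (phi ρ0 hρ0) := by
  refine Metric.continuous_iff.mpr fun x ε hε => ?_
  refine ⟨ε / (d + 1), by positivity, fun y hy => ?_⟩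
  rw [dist_eq_norm]
  calc ‖phi ρ0 hρ0 y - phi ρ0 hρ0 x‖ ≤ ∑ i, |y i - x i| := phi_sub_norm ρ0 hρ0 y x
    _ ≤ ∑ _i : Fin d, ε / (d + 1) := by
        refine Finset.sum_le_sum fun i _ => ?_
        have := dist_le_pi_dist y x i
        simpa [Real.dist_eq] using this.trans hy.le
    _ = d * (ε / (d + 1)) := by simp [mul_comm]
    _ < ε := by
        rw [div_eq_inv_mul, ← mul_assoc]
        have hd : (d : ℝ) * ((d : ℝ) + 1)⁻¹ < 1 := by
          rw [mul_inv_lt_iff₀ (by positivity)]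
          linarith
        nlinarith

end RFAux

namespace RFAux

lemma exp_lip {M s u : ℝ} (hs : |s| ≤ M) (hu : |u| ≤ M) :
    |Real.exp s - Real.exp u| ≤ Real.exp M * |s - u| := by
  wlog h : u ≤ s generalizing s u
  · rw [abs_sub_comm, abs_sub_comm s u]; exact this hu hs (le_of_not_ge h)
  have h1 : Real.exp s * (1 + (u - s)) ≤ Real.exp u := by
    calc Real.exp s * (1 + (u - s)) ≤ Real.exp s * Real.exp (u - s) := by
          apply mul_le_mul_of_nonneg_left _ (Real.exp_pos s).le
          have := Real.add_one_le_exp (u - s)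
          linarith
      _ = Real.exp u := by rw [← Real.exp_add]; ring_nf
  have h2 : Real.exp s - Real.exp u ≤ Real.exp s * (s - u) := by nlinarith
  have h3 : Real.exp s ≤ Real.exp M := Real.exp_le_exp.mpr ((le_abs_self s).trans hs)
  have h4 : Real.exp u ≤ Real.exp s := Real.exp_le_exp.mpr h
  rw [abs_of_nonneg (by linarith), abs_of_nonneg (by linarith)]
  nlinarith [Real.exp_pos s]

end RFAux

namespace RFAux

lemma arith_helper {E δ η R ε : ℝ} (hE0 : 0 < E) (hη0 : 0 < η) (hR : 0 ≤ R)
    (h1 : δ * (4 * E) = ε) (h2 : η * (8 * E * (R + 1)) = ε) :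
    E * (δ + 2 * (R * η)) < ε := by
  nlinarith [mul_pos hE0 hη0, mul_nonneg (mul_nonneg hE0.le hη0.le) hR]

section Main

variable {d : ℕ} (ρ0 : Measure (Fin (d + 1) → ℝ)) [IsProbabilityMeasure ρ0]
  (hρ0 : ∀ᵐ w ∂ρ0, (∑ i, |w i|) ≤ 1)
  (P Qn : Measure (Fin d → ℝ)) [IsProbabilityMeasure P] [IsProbabilityMeasure Qn]

noncomputable def Gfun (f : Lp ℝ 2 ρ0) : ℝ :=
  (∫ x, ⟪f, phi ρ0 hρ0 x⟫ ∂Qn) +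
    Real.log (∫ y, Real.exp (-⟪f, phi ρ0 hρ0 y⟫) ∂P)

variable (hP : ∀ᵐ x ∂P, ∀ i, |x i| ≤ 1) (hQ : ∀ᵐ x ∂Qn, ∀ i, |x i| ≤ 1)

include hP hQ in
set_option maxHeartbeats 2000000 in
lemma exists_min (R : ℝ) (hR : 0 ≤ R) :
    ∃ f₀ : Lp ℝ 2 ρ0, ‖f₀‖ ≤ R ∧
      ∀ f : Lp ℝ 2 ρ0, ‖f‖ ≤ R → Gfun ρ0 hρ0 P Qn f₀ ≤ Gfun ρ0 hρ0 P Qn f := by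
  classical
  set φ := phi ρ0 hρ0 with hφ
  set B : ℝ := (d : ℝ) + 2 with hBdef
  have hB0 : (0:ℝ) ≤ B := by positivity
  have hφbound : ∀ x : Fin d → ℝ, (∀ i, |x i| ≤ 1) → ‖φ x‖ ≤ B := by
    intro x hx
    refine (phi_norm_le ρ0 hρ0 x).trans ?_
    have hsum : (∑ i, |x i|) ≤ (d : ℝ) := by
      calc (∑ i, |x i|) ≤ ∑ _i : Fin d, (1:ℝ) := Finset.sum_le_sum fun i _ => hx i
        _ = d := by simp
    simp only [hBdef]; linarith
  -- integrability of φ with respect to Qn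
  have hφint : Integrable φ Qn := by
    refine (integrable_const B).mono'
      ((phi_continuous ρ0 hρ0).aestronglyMeasurable) (hQ.mono fun x hx => ?_)
    exact hφbound x hx
  set m : Lp ℝ 2 ρ0 := ∫ x, φ x ∂Qn with hm
  have key : ∀ f : Lp ℝ 2 ρ0, (∫ x, ⟪f, φ x⟫ ∂Qn) = ⟪f, m⟫ := fun f => integral_inner hφint f
  -- the weak-star dual setting
  set S : Set (WeakDual ℝ (Lp ℝ 2 ρ0)) := WeakDual.toStrongDual ⁻¹' Metric.closedBall 0 R with hSdef
  have hScompact : IsCompact S := WeakDual.isCompact_closedBall (𝕜 := ℝ) (0 : StrongDual ℝ (Lp ℝ 2 ρ0)) R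
  have hSmem : ∀ ℓ : WeakDual ℝ (Lp ℝ 2 ρ0), ℓ ∈ S ↔ ‖WeakDual.toStrongDual ℓ‖ ≤ R := by
    intro ℓ; simp [hSdef, Metric.mem_closedBall, dist_zero_right]
  have hSbound : ∀ ℓ : WeakDual ℝ (Lp ℝ 2 ρ0), ℓ ∈ S → ∀ v : Lp ℝ 2 ρ0, |ℓ v| ≤ R * ‖v‖ := by
    intro ℓ hℓ v
    have h1 : |ℓ v| ≤ ‖WeakDual.toStrongDual ℓ‖ * ‖v‖ :=
      (WeakDual.toStrongDual ℓ).le_opNorm v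
    exact h1.trans (mul_le_mul_of_nonneg_right ((hSmem ℓ).mp hℓ) (norm_nonneg v))
  -- pointwise bounds for the exponential integrand
  have hℓφbound : ∀ ℓ : WeakDual ℝ (Lp ℝ 2 ρ0), ℓ ∈ S → ∀ᵐ y ∂P, |ℓ (φ y)| ≤ R * B := by
    intro ℓ hℓ
    refine hP.mono fun y hy => ?_
    exact (hSbound ℓ hℓ (φ y)).trans (mul_le_mul_of_nonneg_left (hφbound y hy) hR)
  have hexpcont : ∀ ℓ : WeakDual ℝ (Lp ℝ 2 ρ0), Continuous fun y => Real.exp (-(ℓ (φ y))) := by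
    intro ℓ
    exact Real.continuous_exp.comp
      ((ℓ.cont.comp (phi_continuous ρ0 hρ0)).neg)
  have hFint : ∀ ℓ : WeakDual ℝ (Lp ℝ 2 ρ0), ℓ ∈ S →
      Integrable (fun y => Real.exp (-(ℓ (φ y)))) P := by
    intro ℓ hℓ
    refine (integrable_const (Real.exp (R * B))).mono'
      (hexpcont ℓ).aestronglyMeasurable ((hℓφbound ℓ hℓ).mono fun y hy => ?_)
    rw [Real.norm_eq_abs, abs_of_nonneg (Real.exp_pos _).le]
    exact Real.exp_le_exp.mpr (by cases abs_le.mp hy; linarith)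
  set F : WeakDual ℝ (Lp ℝ 2 ρ0) → ℝ := fun ℓ => ∫ y, Real.exp (-(ℓ (φ y))) ∂P with hF
  set G' : WeakDual ℝ (Lp ℝ 2 ρ0) → ℝ := fun ℓ => ℓ m + Real.log (F ℓ) with hG'
  have hFlb : ∀ ℓ : WeakDual ℝ (Lp ℝ 2 ρ0), ℓ ∈ S → Real.exp (-(R * B)) ≤ F ℓ := by
    intro ℓ hℓ
    have h1 : (∫ _y, Real.exp (-(R * B)) ∂P) ≤ F ℓ := by
      refine integral_mono_ae (integrable_const _) (hFint ℓ hℓ)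
        ((hℓφbound ℓ hℓ).mono fun y hy => ?_)
      exact Real.exp_le_exp.mpr (by cases abs_le.mp hy; linarith)
    simpa using h1
  have hFcont : ContinuousOn F S := by
    intro ℓ₀ hℓ₀
    rw [ContinuousWithinAt]
    refine Metric.tendsto_nhds.mpr fun ε hε => ?_
    set E := Real.exp (R * B) with hE
    have hE1 : 1 ≤ E := Real.one_le_exp (by positivity)
    have hE0 : 0 < E := lt_of_lt_of_le one_pos hE1
    set δ : ℝ := ε / (4 * E) with hδ
    set η : ℝ := ε / (8 * E * (R + 1)) with hη
    have hδ0 : 0 < δ := by positivity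
    have hη0 : 0 < η := by positivity
    have hK : IsCompact (φ '' Metric.closedBall (0 : Fin d → ℝ) 1) :=
      (isCompact_closedBall _ _).image (phi_continuous ρ0 hρ0)
    obtain ⟨t, hts, htfin, hcover⟩ := finite_cover_balls_of_compact hK hη0
    set U : Set (WeakDual ℝ (Lp ℝ 2 ρ0)) := {ℓ | ∀ c ∈ t, |ℓ c - ℓ₀ c| < δ} with hU
    have hUopen : IsOpen U := by
      have hUeq : U = ⋂ c ∈ t, {ℓ : WeakDual ℝ (Lp ℝ 2 ρ0) | |ℓ c - ℓ₀ c| < δ} := by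
        ext ℓ; simp [hU]
      rw [hUeq]
      refine htfin.isOpen_biInter fun c _ => ?_
      have hc : Continuous fun ℓ : WeakDual ℝ (Lp ℝ 2 ρ0) => |ℓ c - ℓ₀ c| :=
        ((WeakDual.eval_continuous c).sub continuous_const).abs
      exact isOpen_lt hc continuous_const
    have hU0 : ℓ₀ ∈ U := fun c _ => by simpa using hδ0
    filter_upwards [mem_nhdsWithin_of_mem_nhds (hUopen.mem_nhds hU0), self_mem_nhdsWithin]
      with ℓ hℓU hℓS
    rw [Real.dist_eq]
    have hae : ∀ᵐ y ∂P,
        |Real.exp (-(ℓ (φ y))) - Real.exp (-(ℓ₀ (φ y)))| ≤ E * (δ + 2 * (R * η)) := by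
      filter_upwards [hP, hℓφbound ℓ hℓS, hℓφbound ℓ₀ hℓ₀] with y hy h1 h2
      have hyK : φ y ∈ φ '' Metric.closedBall (0 : Fin d → ℝ) 1 := by
        refine ⟨y, ?_, rfl⟩
        rw [Metric.mem_closedBall, dist_zero_right]
        exact (pi_norm_le_iff_of_nonneg zero_le_one).mpr fun i => by
          simpa [Real.norm_eq_abs] using hy i
      obtain ⟨c, hct, hcball⟩ := Set.mem_iUnion₂.mp (hcover hyK)
      have hφyc : ‖φ y - c‖ < η := by rwa [Metric.mem_ball, dist_eq_norm] at hcball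
      have hdiff : |ℓ (φ y) - ℓ₀ (φ y)| ≤ δ + 2 * (R * η) := by
        have e1 : |ℓ (φ y) - ℓ c| ≤ R * η := by
          have h := hSbound ℓ hℓS (φ y - c)
          rw [map_sub] at h
          exact h.trans (mul_le_mul_of_nonneg_left hφyc.le hR)
        have e2 : |ℓ₀ c - ℓ₀ (φ y)| ≤ R * η := by
          have h := hSbound ℓ₀ hℓ₀ (c - φ y)
          rw [map_sub] at h
          refine h.trans ?_
          rw [norm_sub_rev]
          exact mul_le_mul_of_nonneg_left hφyc.le hR
        have e3 : |ℓ c - ℓ₀ c| < δ := hℓU c hct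
        have hsplit : ℓ (φ y) - ℓ₀ (φ y)
            = (ℓ (φ y) - ℓ c) + ((ℓ c - ℓ₀ c) + (ℓ₀ c - ℓ₀ (φ y))) := by ring
        rw [hsplit]
        have t1 := abs_add_le (ℓ (φ y) - ℓ c) ((ℓ c - ℓ₀ c) + (ℓ₀ c - ℓ₀ (φ y)))
        have t2 := abs_add_le (ℓ c - ℓ₀ c) (ℓ₀ c - ℓ₀ (φ y))
        linarith
      have hlip := exp_lip (M := R * B) (s := -(ℓ (φ y))) (u := -(ℓ₀ (φ y)))
        (by simpa using h1) (by simpa using h2)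
      have habs : |(-(ℓ (φ y))) - (-(ℓ₀ (φ y)))| = |ℓ (φ y) - ℓ₀ (φ y)| := by
        rw [← abs_neg]; ring_nf
      rw [habs] at hlip
      refine hlip.trans ?_
      exact mul_le_mul_of_nonneg_left hdiff hE0.le
    have hFdiff : |F ℓ - F ℓ₀| ≤ E * (δ + 2 * (R * η)) := by
      have hsub : F ℓ - F ℓ₀
          = ∫ y, (Real.exp (-(ℓ (φ y))) - Real.exp (-(ℓ₀ (φ y)))) ∂P :=
        (integral_sub (hFint ℓ hℓS) (hFint ℓ₀ hℓ₀)).symm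
      rw [hsub]
      have h := norm_integral_le_of_norm_le_const (μ := P)
        (f := fun y => Real.exp (-(ℓ (φ y))) - Real.exp (-(ℓ₀ (φ y))))
        (C := E * (δ + 2 * (R * η)))
        (hae.mono fun y hy => by rw [Real.norm_eq_abs]; exact hy)
      rw [Real.norm_eq_abs] at h
      simpa using h
    refine lt_of_le_of_lt hFdiff ?_
    have hδε : δ * (4 * E) = ε := by
      rw [hδ]; exact div_mul_cancel₀ _ (by positivity)
    have hηε : η * (8 * E * (R + 1)) = ε := by
      rw [hη]; exact div_mul_cancel₀ _ (by positivity)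
    exact arith_helper hE0 hη0 hR hδε hηε
  have hG'cont : ContinuousOn G' S := by
    refine ContinuousOn.add ((WeakDual.eval_continuous m).continuousOn) ?_
    intro ℓ hℓ
    have hpos : 0 < F ℓ := lt_of_lt_of_le (Real.exp_pos _) (hFlb ℓ hℓ)
    exact (Real.continuousAt_log hpos.ne').comp_continuousWithinAt (hFcont ℓ hℓ)
  have h0S : (0 : WeakDual ℝ (Lp ℝ 2 ρ0)) ∈ S := by
    rw [hSmem]
    simpa using hR
  obtain ⟨ℓs, hℓsS, hmin⟩ := hScompact.exists_isMinOn ⟨0, h0S⟩ hG'cont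
  set f₀ : Lp ℝ 2 ρ0 :=
    (InnerProductSpace.toDual ℝ (Lp ℝ 2 ρ0)).symm (WeakDual.toStrongDual ℓs) with hf₀
  have hf₀v : ∀ v : Lp ℝ 2 ρ0, ℓs v = ⟪f₀, v⟫ := by
    intro v
    rw [hf₀]
    exact (InnerProductSpace.toDual_symm_apply).symm
  have hf₀norm : ‖f₀‖ ≤ R := by
    rw [hf₀, LinearIsometryEquiv.norm_map]
    exact (hSmem ℓs).mp hℓsS
  have hGG : ∀ ℓ : WeakDual ℝ (Lp ℝ 2 ρ0), ∀ g : Lp ℝ 2 ρ0,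
      (∀ v, ℓ v = ⟪g, v⟫) → G' ℓ = Gfun ρ0 hρ0 P Qn g := by
    intro ℓ g hv
    rw [hG', Gfun, key g, hF]
    simp only [hv]
    rfl
  refine ⟨f₀, hf₀norm, fun f hf => ?_⟩
  set ℓf : WeakDual ℝ (Lp ℝ 2 ρ0) :=
    StrongDual.toWeakDual ((InnerProductSpace.toDual ℝ (Lp ℝ 2 ρ0)) f) with hℓf
  have hℓfv : ∀ v, ℓf v = ⟪f, v⟫ := fun v => rfl
  have hℓfS : ℓf ∈ S := by
    rw [hSmem]
    have : WeakDual.toStrongDual ℓf = (InnerProductSpace.toDual ℝ (Lp ℝ 2 ρ0)) f := rfl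
    rw [this, LinearIsometryEquiv.norm_map]
    exact hf
  calc Gfun ρ0 hρ0 P Qn f₀ = G' ℓs := (hGG ℓs f₀ hf₀v).symm
    _ ≤ G' ℓf := hmin hℓfS
    _ = Gfun ρ0 hρ0 P Qn f := hGG ℓf f hℓfv

end Main

end RFAux


/-- **existence of the regularized minimizer.** With `P` supported on
`[−1,1]^d`, `ρ₀` supported in the ℓ¹ unit ball, ReLU features, and `Q*^{(n)}` any
probability measure supported on `[−1,1]^d`, for every `R ≥ 0` the objective
`L^{(n)}(a) = ∫ V_a dQ*^{(n)} + log ∫ e^{-V_a} dP` attains its minimum on the closed ball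
`{a ∈ L²(ρ₀) : ‖a‖_{L²(ρ₀)} ≤ R}`. -/
theorem regularized_minimizer_exists {d : ℕ}
    (P : Measure (Fin d → ℝ)) [IsProbabilityMeasure P]
    (hPsupp : P {x | ∀ i, |x i| ≤ 1}ᶜ = 0)
    (ρ0 : Measure (Fin (d + 1) → ℝ)) [IsProbabilityMeasure ρ0]
    (hρ0supp : ρ0 {w | (∑ i, |w i|) ≤ 1}ᶜ = 0)
    (Qn : Measure (Fin d → ℝ)) [IsProbabilityMeasure Qn]
    (hQn : Qn {x | ∀ i, |x i| ≤ 1}ᶜ = 0)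
    (R : ℝ) (hR : 0 ≤ R) :
    ∃ a : (Fin (d + 1) → ℝ) → ℝ, MemLp a 2 ρ0 ∧ (∫ w, a w ^ 2 ∂ρ0) ≤ R ^ 2 ∧
      ∀ b : (Fin (d + 1) → ℝ) → ℝ, MemLp b 2 ρ0 → (∫ w, b w ^ 2 ∂ρ0) ≤ R ^ 2 →
        rfObjective P Qn ρ0 a ≤ rfObjective P Qn ρ0 b := by
  have hρ0ae : ∀ᵐ w ∂ρ0, (∑ i, |w i|) ≤ 1 := by
    rw [ae_iff, ← Set.compl_setOf]; exact hρ0supp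
  have hPae : ∀ᵐ x ∂P, ∀ i, |x i| ≤ 1 := by
    rw [ae_iff, ← Set.compl_setOf]; exact hPsupp
  have hQae : ∀ᵐ x ∂Qn, ∀ i, |x i| ≤ 1 := by
    rw [ae_iff, ← Set.compl_setOf]; exact hQn
  obtain ⟨f₀, hf₀R, hf₀min⟩ := RFAux.exists_min ρ0 hρ0ae P Qn hPae hQae R hR
  have hpot : ∀ (b : (Fin (d + 1) → ℝ) → ℝ) (hb : MemLp b 2 ρ0) (x : Fin d → ℝ),
      rfPotential ρ0 b x = ⟪hb.toLp b, RFAux.phi ρ0 hρ0ae x⟫ := by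
    intro b hb x
    rw [rfPotential, MeasureTheory.L2.inner_def]
    refine integral_congr_ae ?_
    filter_upwards [hb.coeFn_toLp, RFAux.phi_coe ρ0 hρ0ae x] with w h1 h2
    rw [h1, h2]
    simp [RFAux.feat, RCLike.inner_apply]
    exact mul_comm _ _
  have hsq : ∀ (b : (Fin (d + 1) → ℝ) → ℝ) (hb : MemLp b 2 ρ0),
      (∫ w, b w ^ 2 ∂ρ0) = ‖hb.toLp b‖ ^ 2 := by
    intro b hb
    rw [← real_inner_self_eq_norm_sq, MeasureTheory.L2.inner_def]
    refine integral_congr_ae ?_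
    filter_upwards [hb.coeFn_toLp] with w h1
    rw [h1]
    simp [RCLike.inner_apply, sq]
  have hobj : ∀ (b : (Fin (d + 1) → ℝ) → ℝ) (hb : MemLp b 2 ρ0),
      rfObjective P Qn ρ0 b = RFAux.Gfun ρ0 hρ0ae P Qn (hb.toLp b) := by
    intro b hb
    rw [rfObjective, RFAux.Gfun]
    simp only [hpot b hb]
  refine ⟨⇑f₀, Lp.memLp f₀, ?_, ?_⟩
  · rw [hsq _ (Lp.memLp f₀), Lp.toLp_coeFn]
    exact pow_le_pow_left₀ (norm_nonneg _) hf₀R 2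
  · intro b hb hbR
    have h1 : rfObjective P Qn ρ0 ⇑f₀ = RFAux.Gfun ρ0 hρ0ae P Qn f₀ := by
      rw [hobj _ (Lp.memLp f₀), Lp.toLp_coeFn]
    have hbnorm : ‖hb.toLp b‖ ≤ R := by
      rw [hsq b hb] at hbR
      exact (pow_le_pow_iff_left₀ (norm_nonneg _) hR two_ne_zero).mp hbR
    rw [h1, hobj b hb]
    exact hf₀min _ hbnorm
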